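/- For an affine map T(z) = az + b with a ≠ 0, a polynomial f, λ ≠ 0, and g(z) = λ·f(T(z)), the conjugated Stirling map satisfies T(St_g(T⁻¹(z))) = z - f(z)/f'(z - aλ·f(z)) at every point where the expressions are defined. -/

import Mathlib

lemma deriv_affine_poly (p : Polynomial ℂ) (a b l : ℂ) (w : ℂ) :
    deriv (fun z => l * p.eval (a * z + b)) w
      = l * (Polynomial.eval (a * w + b) p.derivative * a) := by
  have h1 : HasDerivAt (fun z : ℂ => a * z + b) a w := by
    simpa using ((hasDerivAt_id w).const_mul a).add_const b
  have h2 := (p.hasDerivAt (a * w + b)).comp w h1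
  exact ((h2.const_mul l)).deriv

/-- For `T z = a z + b` (`a ≠ 0`), a polynomial `f` (as `p`), `λ ≠ 0` and
`g z = λ · f (T z)`, the conjugated Stirling map satisfies
`T (St_g (T⁻¹ z)) = z - f z / f' (z - a λ f z)` wherever defined. -/
theorem stirling_conjugation_formula (p : Polynomial ℂ) (a b l : ℂ) (ha : a ≠ 0)
    (hl : l ≠ 0) :
    let g : ℂ → ℂ := fun z => l * p.eval (a * z + b)
    let Stg : ℂ → ℂ := fun z => z - g z / deriv g (z - g z)
    ∀ z : ℂ, p.derivative.eval (z - a * l * p.eval z) ≠ 0 →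
      a * Stg ((z - b) / a) + b =
        z - p.eval z / p.derivative.eval (z - a * l * p.eval z) := by
  intro g Stg z hz
  have hTz : a * ((z - b) / a) + b = z := by field_simp; ring
  have hgw : g ((z - b) / a) = l * p.eval z := by simp [g, hTz]
  have harg : a * ((z - b) / a - g ((z - b) / a)) + b = z - a * l * p.eval z := by
    rw [hgw]; field_simp; ring
  have hderiv : deriv g ((z - b) / a - g ((z - b) / a))
      = l * (p.derivative.eval (z - a * l * p.eval z) * a) := by
    rw [show (deriv g) = deriv (fun z => l * p.eval (a * z + b)) from rfl,
      deriv_affine_poly, harg]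
  simp only [Stg]
  rw [hderiv, hgw]
  field_simp
  ring
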